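/- Let C = (w_1, …, w_{2ℓ+1}) be a semi-valid tuple in Ω_n. Then H_n^{(2)}(C) consists precisely of the edges {w_i, w_{i+1}} for 1 ≤ i ≤ 2ℓ+1 (indices modulo 2ℓ+1), together with every edge {v_j, w_i} for v_j ∈ (w_{i-1}, w_{i+1}). In particular, |H_n^{(2)}(C)| = n. -/

import Mathlib

open Finset

/-- An abstract convex geometric hypergraph: `m` vertices on a circle, with the
cyclic ordering `0 < 1 < ⋯ < m-1 < 0`, together with a family of edges. -/
structure CGH where
  m : ℕ
  edges : Finset (Finset (Fin m))

/-- A list of points of `Fin n` is in (strict) cyclic order if some rotation of it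
is strictly increasing in the linear order of `Fin n`. -/
def CyclicSorted {n : ℕ} (l : List (Fin n)) : Prop :=
  ∃ k : ℕ, (l.rotate k).Chain' (· < ·)

/-- `H` contains a subhypergraph isomorphic to the convex geometric hypergraph `F`:
there is an injection of the vertices of `F` into `Fin n` respecting the cyclic
orderings and sending every edge of `F` to an edge of `H`. -/
def HasCopy (F : CGH) {n : ℕ} (H : Finset (Finset (Fin n))) : Prop :=
  ∃ f : Fin F.m → Fin n, Function.Injective f ∧ CyclicSorted (List.ofFn f) ∧
    ∀ e ∈ F.edges, e.image f ∈ H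

/-- `H` is an `F`-saturated `r`-uniform convex geometric hypergraph on `Fin n`. -/
def IsSat (F : CGH) (r : ℕ) {n : ℕ} (H : Finset (Finset (Fin n))) : Prop :=
  (∀ h ∈ H, h.card = r) ∧ ¬ HasCopy F H ∧
    ∀ e : Finset (Fin n), e.card = r → e ∉ H → HasCopy F (insert e H)

/-- The saturation number `sat_○(n, F)` for `r`-uniform cgh's on `Fin n`. -/
noncomputable def satNum (F : CGH) (r n : ℕ) : ℕ :=
  sInf {k | ∃ H : Finset (Finset (Fin n)), IsSat F r H ∧ H.card = k}

/-- `M_1^{(r)}`: two geometrically disjoint `r`-tuples. -/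
def M1r (r : ℕ) : CGH where
  m := 2 * r
  edges := {Finset.univ.filter (fun i : Fin (2 * r) => (i : ℕ) < r),
            Finset.univ.filter (fun i : Fin (2 * r) => r ≤ (i : ℕ))}

def M1cgh : CGH := ⟨6, {({0, 1, 2} : Finset (Fin 6)), ({3, 4, 5} : Finset (Fin 6))}⟩
def M2cgh : CGH := ⟨6, {({0, 1, 3} : Finset (Fin 6)), ({2, 4, 5} : Finset (Fin 6))}⟩
def M3cgh : CGH := ⟨6, {({0, 2, 4} : Finset (Fin 6)), ({1, 3, 5} : Finset (Fin 6))}⟩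
def S1cgh : CGH := ⟨5, {({0, 1, 4} : Finset (Fin 5)), ({0, 2, 3} : Finset (Fin 5))}⟩
def S2cgh : CGH := ⟨5, {({0, 1, 2} : Finset (Fin 5)), ({0, 3, 4} : Finset (Fin 5))}⟩
def S3cgh : CGH := ⟨5, {({0, 1, 3} : Finset (Fin 5)), ({0, 2, 4} : Finset (Fin 5))}⟩
def D1cgh : CGH := ⟨4, {({0, 1, 2} : Finset (Fin 4)), ({0, 2, 3} : Finset (Fin 4))}⟩
def D2cgh : CGH := ⟨4, {({0, 1, 2} : Finset (Fin 4)), ({0, 1, 3} : Finset (Fin 4))}⟩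

/-- The closed clockwise arc `[a, b]` in `Fin n`. -/
def arcCC {n : ℕ} (a b : Fin n) : Finset (Fin n) :=
  if a ≤ b then Finset.univ.filter (fun x => a ≤ x ∧ x ≤ b)
  else Finset.univ.filter (fun x => a ≤ x ∨ x ≤ b)

/-- The open clockwise arc `(a, b)` in `Fin n`. -/
def arcOO {n : ℕ} (a b : Fin n) : Finset (Fin n) :=
  if a < b then Finset.univ.filter (fun x => a < x ∧ x < b)
  else Finset.univ.filter (fun x => a < x ∨ x < b)

/-- The tuple `(w_1, …, w_{2ℓ+1})` (`0`-indexed here) consists of distinct points with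
`w_1 < w_3 < ⋯ < w_{2ℓ+1} < w_2 < w_4 < ⋯ < w_{2ℓ} < w_1` in the cyclic order. -/
def SemiValid {n : ℕ} (ℓ : ℕ) (w : Fin (2 * ℓ + 1) → Fin n) : Prop :=
  Function.Injective w ∧
    CyclicSorted (List.ofFn fun p : Fin (2 * ℓ + 1) =>
      w ⟨(2 * (p : ℕ)) % (2 * ℓ + 1), Nat.mod_lt _ (by omega)⟩)

/-- A semi-valid tuple is `r`-valid if moreover `|[w_i, w_{i-1}]| ≥ r` for all `i`. -/
def RValid {n : ℕ} (r ℓ : ℕ) (w : Fin (2 * ℓ + 1) → Fin n) : Prop :=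
  SemiValid ℓ w ∧ ∀ i : Fin (2 * ℓ + 1), r ≤ (arcCC (w i) (w (i - 1))).card

/-- `H_n^{(r)}(C)`: all `r`-sets meeting every interval `[w_i, w_{i-1}]`. -/
def HnC {n : ℕ} (r ℓ : ℕ) (w : Fin (2 * ℓ + 1) → Fin n) : Finset (Finset (Fin n)) :=
  (Finset.powersetCard r Finset.univ).filter fun e =>
    ∀ i : Fin (2 * ℓ + 1), (e ∩ arcCC (w i) (w (i - 1))).Nonempty

/-- `j` is the vertex `λ(v)` for `v` in `H`. -/
def IsLam {n : ℕ} [NeZero n] (H : Finset (Finset (Fin n))) (v j : Fin n) : Prop :=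
  (∃ h ∈ H, v ∈ h ∧ h ⊆ arcCC j v) ∧ ¬ ∃ h ∈ H, v ∈ h ∧ h ⊆ arcCC (j + 1) v

/-- `j` is the vertex `ρ(v)` for `v` in `H`. -/
def IsRho {n : ℕ} [NeZero n] (H : Finset (Finset (Fin n))) (v j : Fin n) : Prop :=
  (∃ h ∈ H, v ∈ h ∧ h ⊆ arcCC v j) ∧ ¬ ∃ h ∈ H, v ∈ h ∧ h ⊆ arcCC v (j - 1)

noncomputable def lamF {n : ℕ} [NeZero n] (H : Finset (Finset (Fin n))) (v : Fin n) : Fin n :=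
  letI := Classical.propDecidable (∃ j, IsLam H v j)
  if h : ∃ j, IsLam H v j then h.choose else v

noncomputable def rhoF {n : ℕ} [NeZero n] (H : Finset (Finset (Fin n))) (v : Fin n) : Fin n :=
  letI := Classical.propDecidable (∃ j, IsRho H v j)
  if h : ∃ j, IsRho H v j then h.choose else v

/-- Strict cyclic betweenness on `Fin n`. -/
def CyclicSbtw {n : ℕ} (a b c : Fin n) : Prop :=
  (a < b ∧ b < c) ∨ (b < c ∧ c < a) ∨ (c < a ∧ a < b)

/-- Isomorphism of two cgh's on `Fin n`: a bijection of the vertex set respecting the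
cyclic order and inducing a bijection of the edge sets. -/
def CGHIso {n : ℕ} (H H' : Finset (Finset (Fin n))) : Prop :=
  ∃ g : Fin n ≃ Fin n,
    (∀ a b c : Fin n, CyclicSbtw a b c → CyclicSbtw (g a) (g b) (g c)) ∧
    ∀ e : Finset (Fin n), e ∈ H ↔ e.image g ∈ H'

/-- The 3-cgh `H_n^{(3)}`: all triples containing `v_0`, together with all triples
containing one of the pairs `{v_1, v_{n-2}}`, `{v_1, v_{n-1}}`, `{v_2, v_{n-1}}`. -/
def Hn3 (n : ℕ) (hn : 6 ≤ n) : Finset (Finset (Fin n)) :=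
  (Finset.powersetCard 3 Finset.univ).filter fun e =>
    (⟨0, by omega⟩ : Fin n) ∈ e ∨
    ((⟨1, by omega⟩ : Fin n) ∈ e ∧ (⟨n - 2, by omega⟩ : Fin n) ∈ e) ∨
    ((⟨1, by omega⟩ : Fin n) ∈ e ∧ (⟨n - 1, by omega⟩ : Fin n) ∈ e) ∨
    ((⟨2, by omega⟩ : Fin n) ∈ e ∧ (⟨n - 1, by omega⟩ : Fin n) ∈ e)

/-- Saturation with respect to a family of cgh's. -/
def FamSat (ℱ : Set CGH) (r : ℕ) {n : ℕ} (H : Finset (Finset (Fin n))) : Prop :=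
  (∀ h ∈ H, h.card = r) ∧ (∀ F ∈ ℱ, ¬ HasCopy F H) ∧
    ∀ e : Finset (Fin n), e.card = r → e ∉ H → ∃ F ∈ ℱ, HasCopy F (insert e H)

noncomputable def famSatNum (ℱ : Set CGH) (r n : ℕ) : ℕ :=
  sInf {k | ∃ H : Finset (Finset (Fin n)), FamSat ℱ r H ∧ H.card = k}

/-- Rotation of a point of `Fin n` by an integer amount `m`. -/
def finShift {n : ℕ} (hn : 0 < n) (v : Fin n) (m : ℤ) : Fin n :=
  ⟨(((v : ℤ) + m) % (n : ℤ)).toNat, by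
    have h0 : (0 : ℤ) < (n : ℤ) := by exact_mod_cast hn
    have h1 := Int.emod_nonneg ((v : ℤ) + m) (by omega : (n : ℤ) ≠ 0)
    have h2 := Int.emod_lt_of_pos ((v : ℤ) + m) h0
    omega⟩

/-- The tuple `w` is `(i,k)`-consecutive: starting from position `i`, the entries at
positions `i, i+2, …, i+2(k-1)` are `k` consecutive points `v_j, v_{j+1}, …, v_{j+k-1}`. -/
def ConsecAt {n ℓ : ℕ} (hn : 0 < n) (w : Fin (2 * ℓ + 1) → Fin n)
    (i : Fin (2 * ℓ + 1)) (k : ℕ) : Prop :=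
  ∃ j : Fin n, ∀ s : ℕ, s < k →
    w (i + ⟨(2 * s) % (2 * ℓ + 1), Nat.mod_lt _ (by omega)⟩) = finShift hn j s

/-- The tuple `C_{i,k,m}`: the `k` consecutive points at positions `i, i+2, …, i+2(k-1)`
are rotated by `m` units; all other entries are unchanged. -/
def shiftTuple {n ℓ : ℕ} (hn : 0 < n) (w : Fin (2 * ℓ + 1) → Fin n)
    (i : Fin (2 * ℓ + 1)) (k : ℕ) (m : ℤ) : Fin (2 * ℓ + 1) → Fin n :=
  fun p => if (p - i).val % 2 = 0 ∧ (p - i).val / 2 < k then finShift hn (w p) m else w p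

section Aux
variable {n N : ℕ}

noncomputable def cdA (t : Fin N → Fin n) (x : Fin n) : ℕ :=
  if h : (univ.filter fun p => t p ≤ x).Nonempty then
    ((univ.filter fun p => t p ≤ x).max' h).val + 1 else 0

noncomputable def cdB (t : Fin N → Fin n) (x : Fin n) : ℕ :=
  if h : (univ.filter fun p => t p < x).Nonempty then
    ((univ.filter fun p => t p < x).max' h).val + 1 else 0

noncomputable def cd (t : Fin N → Fin n) (x : Fin n) : ℕ := cdA t x + cdB t x

lemma cdA_le_N (t : Fin N → Fin n) (x : Fin n) : cdA t x ≤ N := by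
  rw [cdA]; split_ifs with hne
  · have := ((univ.filter fun p => t p ≤ x).max' hne).isLt; omega
  · omega

lemma cdB_le_N (t : Fin N → Fin n) (x : Fin n) : cdB t x ≤ N := by
  rw [cdB]; split_ifs with hne
  · have := ((univ.filter fun p => t p < x).max' hne).isLt; omega
  · omega

lemma cdA_iff {t : Fin N → Fin n} (ht : StrictMono t) (a : Fin N) (x : Fin n) :
    t a ≤ x ↔ a.val < cdA t x := by
  constructor
  · intro h
    have hne : (univ.filter fun p => t p ≤ x).Nonempty :=
      ⟨a, mem_filter.mpr ⟨mem_univ _, h⟩⟩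
    rw [cdA, dif_pos hne]
    have := Finset.le_max' (univ.filter fun p => t p ≤ x) a (mem_filter.mpr ⟨mem_univ _, h⟩)
    omega
  · intro h
    rw [cdA] at h
    split_ifs at h with hne
    · have hm := Finset.max'_mem _ hne
      simp only [mem_filter, mem_univ, true_and] at hm
      have : a ≤ (univ.filter fun p => t p ≤ x).max' hne := by
        rw [Fin.le_def]; omega
      exact le_trans (ht.monotone this) hm
    · omega

lemma cdB_iff {t : Fin N → Fin n} (ht : StrictMono t) (a : Fin N) (x : Fin n) :
    t a < x ↔ a.val < cdB t x := by
  constructor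
  · intro h
    have hne : (univ.filter fun p => t p < x).Nonempty :=
      ⟨a, mem_filter.mpr ⟨mem_univ _, h⟩⟩
    rw [cdB, dif_pos hne]
    have := Finset.le_max' (univ.filter fun p => t p < x) a (mem_filter.mpr ⟨mem_univ _, h⟩)
    omega
  · intro h
    rw [cdB] at h
    split_ifs at h with hne
    · have hm := Finset.max'_mem _ hne
      simp only [mem_filter, mem_univ, true_and] at hm
      have : a ≤ (univ.filter fun p => t p < x).max' hne := by
        rw [Fin.le_def]; omega
      exact lt_of_le_of_lt (ht.monotone this) hm
    · omega

lemma cdB_le_cdA {t : Fin N → Fin n} (ht : StrictMono t) (x : Fin n) :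
    cdB t x ≤ cdA t x := by
  by_cases h : cdB t x = 0
  · omega
  · have h2 : cdB t x - 1 < N := by have := cdB_le_N t x; omega
    have hlt := (cdB_iff ht ⟨cdB t x - 1, h2⟩ x).mpr (by simp; omega)
    have := (cdA_iff ht ⟨cdB t x - 1, h2⟩ x).mp hlt.le
    simp at this; omega

lemma cdA_le_cdB_add_one {t : Fin N → Fin n} (ht : StrictMono t) (x : Fin n) :
    cdA t x ≤ cdB t x + 1 := by
  by_cases h : cdA t x ≤ 1
  · omega
  · have h2 : cdA t x - 1 < N := by have := cdA_le_N t x; omega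
    have h2' : cdA t x - 2 < N := by omega
    have hle := (cdA_iff ht ⟨cdA t x - 1, h2⟩ x).mpr (by simp; omega)
    have hlt : t ⟨cdA t x - 2, h2'⟩ < x :=
      lt_of_lt_of_le (ht (by rw [Fin.lt_def]; simp; omega)) hle
    have := (cdB_iff ht ⟨cdA t x - 2, h2'⟩ x).mp hlt
    simp at this; omega

-- the four main code iffs
lemma cd_le_iff {t : Fin N → Fin n} (ht : StrictMono t) (a : Fin N) (x : Fin n) :
    t a ≤ x ↔ 2 * a.val < cd t x := by
  rw [cdA_iff ht a x, cd]
  have := cdB_le_cdA ht x; have := cdA_le_cdB_add_one ht x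
  omega

lemma cd_ge_iff {t : Fin N → Fin n} (ht : StrictMono t) (b : Fin N) (x : Fin n) :
    x ≤ t b ↔ cd t x ≤ 2 * b.val + 1 := by
  rw [← not_lt, cdB_iff ht b x, cd]
  have := cdB_le_cdA ht x; have := cdA_le_cdB_add_one ht x
  omega

lemma cd_lt_iff {t : Fin N → Fin n} (ht : StrictMono t) (a : Fin N) (x : Fin n) :
    t a < x ↔ 2 * a.val + 1 < cd t x := by
  rw [cdB_iff ht a x, cd]
  have := cdB_le_cdA ht x; have := cdA_le_cdB_add_one ht x
  omega

lemma cd_gt_iff {t : Fin N → Fin n} (ht : StrictMono t) (b : Fin N) (x : Fin n) :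
    x < t b ↔ cd t x ≤ 2 * b.val := by
  rw [← not_le, cdA_iff ht b x, cd]
  have := cdB_le_cdA ht x; have := cdA_le_cdB_add_one ht x
  omega

lemma cd_le_2N (t : Fin N → Fin n) (x : Fin n) : cd t x ≤ 2 * N := by
  have := cdA_le_N t x; have := cdB_le_N t x; rw [cd]; omega

lemma cd_of_t {t : Fin N → Fin n} (ht : StrictMono t) (p : Fin N) :
    cd t (t p) = 2 * p.val + 1 := by
  have h1 := (cd_le_iff ht p (t p)).mp le_rfl
  have h2 := (cd_ge_iff ht p (t p)).mp le_rfl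
  omega

lemma cd_odd_eq {t : Fin N → Fin n} (ht : StrictMono t) (x : Fin n)
    (h : cd t x % 2 = 1) (hd : cd t x / 2 < N) :
    x = t ⟨cd t x / 2, hd⟩ := by
  have h1 : ¬ (t ⟨cd t x / 2, hd⟩ < x) := by rw [cd_lt_iff ht]; simp; omega
  have h2 : t ⟨cd t x / 2, hd⟩ ≤ x := by rw [cd_le_iff ht]; simp; omega
  exact le_antisymm (not_lt.mp h1) h2

lemma cd_even_ne {t : Fin N → Fin n} (ht : StrictMono t) (x : Fin n)
    (h : cd t x % 2 = 0) (p : Fin N) : x ≠ t p := by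
  intro hx; rw [hx, cd_of_t ht] at h; omega

end Aux

section Aux2
variable {n N : ℕ}

lemma mem_arcCC_cd {t : Fin N → Fin n} (ht : StrictMono t) (a b : Fin N) (x : Fin n) :
    x ∈ arcCC (t a) (t b) ↔
      (a.val ≤ b.val ∧ 2 * a.val < cd t x ∧ cd t x ≤ 2 * b.val + 1) ∨
      (b.val < a.val ∧ (2 * a.val < cd t x ∨ cd t x ≤ 2 * b.val + 1)) := by
  have hab : t a ≤ t b ↔ a.val ≤ b.val := by rw [ht.le_iff_le, Fin.le_def]
  rw [arcCC]
  split_ifs with h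
  · rw [hab] at h
    simp only [mem_filter, mem_univ, true_and, cd_le_iff ht, cd_ge_iff ht]
    omega
  · rw [hab] at h
    simp only [mem_filter, mem_univ, true_and, cd_le_iff ht, cd_ge_iff ht]
    omega

lemma mem_arcOO_cd {t : Fin N → Fin n} (ht : StrictMono t) (a b : Fin N) (x : Fin n) :
    x ∈ arcOO (t a) (t b) ↔
      (a.val < b.val ∧ 2 * a.val + 1 < cd t x ∧ cd t x ≤ 2 * b.val) ∨
      (b.val ≤ a.val ∧ (2 * a.val + 1 < cd t x ∨ cd t x ≤ 2 * b.val)) := by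
  have hab : t a < t b ↔ a.val < b.val := by rw [ht.lt_iff_lt, Fin.lt_def]
  rw [arcOO]
  split_ifs with h
  · rw [hab] at h
    simp only [mem_filter, mem_univ, true_and, cd_lt_iff ht, cd_gt_iff ht]
    omega
  · rw [hab] at h
    simp only [mem_filter, mem_univ, true_and, cd_lt_iff ht, cd_gt_iff ht]
    omega

/-- code-level membership in the arc `[t q, t (q+ℓ)]` -/
def memA (ℓ q c : ℕ) : Prop :=
  (q ≤ ℓ ∧ 2 * q < c ∧ c ≤ 2 * q + 2 * ℓ + 1) ∨
  (ℓ < q ∧ (2 * q < c ∨ c + 2 * ℓ + 1 ≤ 2 * q))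

/-- the code-level pattern of pairs belonging to `H_n^{(2)}(C)` -/
def patt (ℓ γ δ : ℕ) : Prop :=
  (δ = γ + (2 * ℓ + 1) ∨ γ = δ + (2 * ℓ + 1)) ∨
  (γ % 2 = 1 ∧ δ % 2 = 1 ∧
    (δ = γ + 2 * ℓ ∨ γ = δ + 2 * ℓ ∨ δ = γ + (2 * ℓ + 2) ∨ γ = δ + (2 * ℓ + 2)))

lemma patt_symm {ℓ γ δ : ℕ} (h : patt ℓ γ δ) : patt ℓ δ γ := by
  simp only [patt] at h ⊢; omega

lemma claimB_bwd {ℓ γ δ : ℕ} (hl : 1 ≤ ℓ) (hγ : γ ≤ 4 * ℓ + 2) (hδ : δ ≤ 4 * ℓ + 2)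
    (h : patt ℓ γ δ) : ∀ q, q ≤ 2 * ℓ → memA ℓ q γ ∨ memA ℓ q δ := by
  intro q hq
  simp only [patt] at h
  simp only [memA]
  omega

lemma claimB_fwd {ℓ γ δ : ℕ} (hl : 1 ≤ ℓ) (hγδ : γ ≤ δ) (hδ : δ ≤ 4 * ℓ + 2)
    (h : ∀ q, q ≤ 2 * ℓ → memA ℓ q γ ∨ memA ℓ q δ) : patt ℓ γ δ := by
  by_contra hn
  simp only [patt] at hn
  rcases le_or_gt δ (2 * ℓ) with c1 | c1
  · have := h ℓ (by omega); simp only [memA] at this; omega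
  · rcases le_or_gt (2 * ℓ + 2) γ with c2 | c2
    · have := h 0 (by omega); simp only [memA] at this; omega
    · rcases le_or_gt (2 * ℓ + 2) (δ - γ) with c3 | c3
      · have := h ((γ + 1) / 2) (by omega); simp only [memA] at this; omega
      · have := h ((δ + 1) / 2) (by omega); simp only [memA] at this; omega

end Aux2
section Aux3

open Fin.NatCast Fin.CommRing in
lemma exists_t {n ℓ : ℕ} (hℓ : 1 ≤ ℓ) (w : Fin (2*ℓ+1) → Fin n) (hw : SemiValid ℓ w) :
    ∃ (t : Fin (2*ℓ+1) → Fin n) (π : Fin (2*ℓ+1) → Fin (2*ℓ+1)),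
      StrictMono t ∧ Function.Surjective π ∧ (∀ i, w i = t (π i)) ∧
      (∀ i, (π (i-1)).val = ((π i).val + ℓ) % (2*ℓ+1)) ∧
      (∀ i, (π (i+1)).val = ((π i).val + (ℓ+1)) % (2*ℓ+1)) := by
  haveI : NeZero (2*ℓ+1) := ⟨by omega⟩
  obtain ⟨hinj, k, hch⟩ := hw
  set t : Fin (2*ℓ+1) → Fin n :=
    fun q => w ⟨2 * ((q.val + k) % (2*ℓ+1)) % (2*ℓ+1), Nat.mod_lt _ (by omega)⟩ with htdef
  have ht : StrictMono t := by
    intro q q' hlt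
    have hpw := List.isChain_iff_pairwise.mp hch
    rw [List.pairwise_iff_getElem] at hpw
    have hL : ((List.ofFn fun p : Fin (2*ℓ+1) =>
        w ⟨2 * (p : ℕ) % (2*ℓ+1), Nat.mod_lt _ (by omega)⟩).rotate k).length = 2*ℓ+1 := by
      rw [List.length_rotate, List.length_ofFn]
    have h := hpw q.val q'.val (by rw [hL]; exact q.isLt) (by rw [hL]; exact q'.isLt) hlt
    rw [List.getElem_rotate, List.getElem_rotate] at h
    simp only [List.getElem_ofFn, List.length_ofFn] at h
    exact h
  set π : Fin (2*ℓ+1) → Fin (2*ℓ+1) :=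
    fun i => ((ℓ+1 : ℕ) : Fin (2*ℓ+1)) * i - ((k : ℕ) : Fin (2*ℓ+1)) with hπ
  have cast_mk : ∀ (a : ℕ) (h : a % (2*ℓ+1) < 2*ℓ+1),
      (⟨a % (2*ℓ+1), h⟩ : Fin (2*ℓ+1)) = (a : Fin (2*ℓ+1)) := by
    intro a h; ext; simp [Fin.val_natCast]
  have hone : ((2*ℓ+2 : ℕ) : Fin (2*ℓ+1)) = 1 := by
    have e : (2*ℓ+2 : ℕ) = (2*ℓ+1) + 1 := by omega
    rw [e, Nat.cast_add, Nat.cast_one, Fin.natCast_self, zero_add]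
  have hπsurj : Function.Surjective π := by
    intro q
    refine ⟨2 * (q + ((k:ℕ) : Fin (2*ℓ+1))), ?_⟩
    simp only [hπ]
    have h3 : ((ℓ+1:ℕ) : Fin (2*ℓ+1)) * (2 * (q + ((k:ℕ) : Fin (2*ℓ+1))))
        = q + ((k:ℕ) : Fin (2*ℓ+1)) := by
      have e : ((ℓ+1:ℕ) : Fin (2*ℓ+1)) * (2 * (q + ((k:ℕ) : Fin (2*ℓ+1))))
          = ((2*ℓ+2:ℕ) : Fin (2*ℓ+1)) * (q + ((k:ℕ) : Fin (2*ℓ+1))) := by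
        push_cast; ring
      rw [e, hone, one_mul]
    rw [h3, add_sub_cancel_right]
  have hkey : ∀ a : Fin (2*ℓ+1), (2 : Fin (2*ℓ+1)) * (π a + ((k:ℕ) : Fin (2*ℓ+1))) = a := by
    intro a
    simp only [hπ]
    rw [sub_add_cancel]
    rw [show (2 : Fin (2*ℓ+1)) * (((ℓ+1:ℕ) : Fin (2*ℓ+1)) * a)
        = ((2*ℓ+2:ℕ) : Fin (2*ℓ+1)) * a from by push_cast; ring]
    rw [hone, one_mul]
  have hval : ∀ a : Fin (2*ℓ+1), 2 * (((π a).val + k) % (2*ℓ+1)) % (2*ℓ+1) = a.val := by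
    intro a
    conv_rhs => rw [← hkey a]
    rw [Fin.val_mul, Fin.val_add, Fin.val_natCast]
    rw [show ((2 : Fin (2*ℓ+1))).val = 2 % (2*ℓ+1) from rfl]
    rw [Nat.mod_eq_of_lt (show 2 < 2*ℓ+1 by omega)]
    congr 2
    conv_lhs => rw [Nat.add_mod]
    conv_rhs => rw [Nat.add_mod, Nat.mod_mod_of_dvd _ dvd_rfl]
  have hwt : ∀ i, w i = t (π i) := by
    intro i
    simp only [htdef]
    congr 1
    ext
    exact (hval i).symm
  have hvalcast : (((ℓ:ℕ)) : Fin (2*ℓ+1)).val = ℓ := by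
    rw [Fin.val_natCast, Nat.mod_eq_of_lt (by omega)]
  have hvalcast1 : ((ℓ+1 : ℕ) : Fin (2*ℓ+1)).val = ℓ+1 := by
    rw [Fin.val_natCast, Nat.mod_eq_of_lt (by omega)]
  have hc : ((ℓ:ℕ) : Fin (2*ℓ+1)) + ((ℓ+1:ℕ) : Fin (2*ℓ+1)) = 0 := by
    rw [show ((ℓ:ℕ) : Fin (2*ℓ+1)) + ((ℓ+1:ℕ) : Fin (2*ℓ+1))
        = ((2*ℓ+1 : ℕ) : Fin (2*ℓ+1)) from by push_cast; ring]
    exact Fin.natCast_self _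
  have hπpred : ∀ i, (π (i-1)).val = ((π i).val + ℓ) % (2*ℓ+1) := by
    intro i
    have e : π (i - 1) = π i + ((ℓ:ℕ) : Fin (2*ℓ+1)) := by
      simp only [hπ]
      linear_combination -hc
    rw [e, Fin.add_def, hvalcast]
  have hπsucc : ∀ i, (π (i+1)).val = ((π i).val + (ℓ+1)) % (2*ℓ+1) := by
    intro i
    have e : π (i + 1) = π i + ((ℓ+1:ℕ) : Fin (2*ℓ+1)) := by
      simp only [hπ]; ring
    rw [e, Fin.add_def, hvalcast1]
  exact ⟨t, π, ht, hπsurj, hwt, hπpred, hπsucc⟩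

end Aux3

lemma modM (ℓ a : ℕ) (ha : a < 2*(2*ℓ+1)) :
    a % (2*ℓ+1) < 2*ℓ+1 ∧
      ((a < 2*ℓ+1 ∧ a % (2*ℓ+1) = a) ∨ (2*ℓ+1 ≤ a ∧ a % (2*ℓ+1) = a - (2*ℓ+1))) := by
  refine ⟨Nat.mod_lt _ (by omega), ?_⟩
  rcases lt_or_ge a (2*ℓ+1) with h | h
  · exact Or.inl ⟨h, Nat.mod_eq_of_lt h⟩
  · exact Or.inr ⟨h, by rw [Nat.mod_eq_sub_mod h, Nat.mod_eq_of_lt (by omega)]⟩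

open Fin.NatCast in
theorem HnC_two_structure' (n ℓ : ℕ) (hℓ : 1 ≤ ℓ) (w : Fin (2 * ℓ + 1) → Fin n)
    (hw : SemiValid ℓ w) :
    (∀ e : Finset (Fin n), e ∈ HnC 2 ℓ w ↔
      ((∃ i : Fin (2 * ℓ + 1), e = {w i, w (i + 1)}) ∨
        (∃ i : Fin (2 * ℓ + 1), ∃ v ∈ arcOO (w (i - 1)) (w (i + 1)), e = {v, w i}))) ∧
    (HnC 2 ℓ w).card = n := by
  haveI : NeZero (2*ℓ+1) := ⟨by omega⟩
  obtain ⟨t, π, ht, hπsurj, hwt, hπpred, hπsucc⟩ := exists_t hℓ w hw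
  have hM := modM ℓ
  -- the partner-position map and candidate edges
  set Pt : Fin n → Fin (2*ℓ+1) :=
    fun x => ⟨((cd t x + 1)/2 + ℓ) % (2*ℓ+1), Nat.mod_lt _ (by omega)⟩ with hPt
  set E : Fin n → Finset (Fin n) := fun x => {x, t (Pt x)} with hE
  have hPtval : ∀ x, (Pt x).val = ((cd t x + 1)/2 + ℓ) % (2*ℓ+1) := by
    intro x; simp only [hPt]
  have hcdle : ∀ x : Fin n, cd t x ≤ 2*(2*ℓ+1) := fun x => cd_le_2N t x
  -- x is never its own partner
  have hne : ∀ x : Fin n, x ≠ t (Pt x) := by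
    intro x h
    rcases Nat.mod_two_eq_zero_or_one (cd t x) with hpar | hpar
    · exact cd_even_ne ht x hpar (Pt x) h
    · have hd : cd t x / 2 < 2*ℓ+1 := by have := hcdle x; omega
      have hx := cd_odd_eq ht x hpar hd
      have : Pt x = ⟨cd t x / 2, hd⟩ := ht.injective (by rw [← h]; exact hx)
      have hv := congrArg Fin.val this
      rw [hPtval] at hv
      simp only at hv
      obtain ⟨h1, h2⟩ := hM ((cd t x + 1)/2 + ℓ) (by have := hcdle x; omega)
      omega
  have hcard2 : ∀ x, (E x).card = 2 := by
    intro x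
    simp only [hE]
    rw [Finset.card_insert_of_notMem (by simpa using hne x), Finset.card_singleton]
  -- the code pattern of a candidate edge
  have hpatt : ∀ x : Fin n, patt ℓ (cd t x) (cd t (t (Pt x))) := by
    intro x
    rw [cd_of_t ht, hPtval]
    obtain ⟨h1, h2⟩ := hM ((cd t x + 1)/2 + ℓ) (by have := hcdle x; omega)
    have := hcdle x
    simp only [patt]
    omega
  -- arcs in code terms
  have hℓlt : ℓ < 2*ℓ+1 := by omega
  have hπpredF : ∀ i, π (i-1) = π i + ((ℓ:ℕ) : Fin (2*ℓ+1)) := by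
    intro i; ext
    rw [hπpred, Fin.val_add, Fin.val_natCast, Nat.mod_eq_of_lt hℓlt]
  have harc : ∀ (q : Fin (2*ℓ+1)) (x : Fin n),
      x ∈ arcCC (t q) (t (q + ((ℓ:ℕ) : Fin (2*ℓ+1)))) ↔ memA ℓ q.val (cd t x) := by
    intro q x
    rw [mem_arcCC_cd ht]
    have hbv : (q + ((ℓ:ℕ) : Fin (2*ℓ+1))).val = (q.val + ℓ) % (2*ℓ+1) := by
      rw [Fin.val_add, Fin.val_natCast, Nat.mod_eq_of_lt hℓlt]
    rw [hbv]
    obtain ⟨h1, h2⟩ := hM (q.val + ℓ) (by have := q.isLt; omega)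
    have := q.isLt
    simp only [memA]
    omega
  have hpair : ∀ (x y : Fin n) (s : Finset (Fin n)),
      (({x, y} : Finset (Fin n)) ∩ s).Nonempty ↔ x ∈ s ∨ y ∈ s := by
    intro x y s
    constructor
    · rintro ⟨z, hz⟩
      rw [Finset.mem_inter, Finset.mem_insert, Finset.mem_singleton] at hz
      rcases hz with ⟨rfl | rfl, h⟩
      · exact Or.inl h
      · exact Or.inr h
    · rintro (h | h)
      · exact ⟨x, Finset.mem_inter.mpr ⟨by simp, h⟩⟩
      · exact ⟨y, Finset.mem_inter.mpr ⟨by simp, h⟩⟩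
  -- membership in HnC in code terms
  have hmemHnC : ∀ x y : Fin n, x ≠ y →
      (({x, y} : Finset (Fin n)) ∈ HnC 2 ℓ w ↔
        ∀ q' : ℕ, q' ≤ 2*ℓ → memA ℓ q' (cd t x) ∨ memA ℓ q' (cd t y)) := by
    intro x y hxy
    simp only [HnC, Finset.mem_filter, Finset.mem_powersetCard]
    constructor
    · rintro ⟨-, h⟩ q' hq'
      obtain ⟨i, hi⟩ := hπsurj ⟨q', by omega⟩
      have h2 := h i
      rw [hwt i, hwt (i-1), hπpredF i, hpair, harc, harc, hi] at h2
      simpa using h2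
    · intro h
      refine ⟨⟨Finset.subset_univ _, Finset.card_pair hxy⟩, ?_⟩
      intro i
      rw [hwt i, hwt (i-1), hπpredF i, hpair, harc, harc]
      exact h (π i).val (by have := (π i).isLt; omega)
  -- every candidate edge is in HnC
  have hEmem : ∀ x : Fin n, E x ∈ HnC 2 ℓ w := by
    intro x
    have := (hmemHnC x (t (Pt x)) (hne x)).mpr
      (claimB_bwd hℓ (by have := hcdle x; omega)
        (by have := cd_of_t ht (Pt x); have := (Pt x).isLt; omega) (hpatt x))
    exact this
  -- building a candidate edge from a pattern pair
  have hEofPair : ∀ x y : Fin n, cd t y % 2 = 1 → (Pt x).val = cd t y / 2 →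
      ({x, y} : Finset (Fin n)) = E x := by
    intro x y hy hv
    have hlt : cd t y / 2 < 2*ℓ+1 := by have := hcdle y; omega
    have hyy := cd_odd_eq ht y hy hlt
    simp only [hE]
    have harg : Pt x = ⟨cd t y / 2, hlt⟩ := by ext; exact hv
    rw [hyy, harg]
  have hbuild : ∀ x y : Fin n, x ≠ y → cd t x ≤ cd t y → patt ℓ (cd t x) (cd t y) →
      ∃ z, ({x, y} : Finset (Fin n)) = E z := by
    intro x y hxy hle hp
    simp only [patt] at hp
    have hbx := hcdle x
    have hby := hcdle y
    have hcases : (cd t y = cd t x + (2*ℓ+1)) ∨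
        (cd t x % 2 = 1 ∧ cd t y % 2 = 1 ∧
          (cd t y = cd t x + 2*ℓ ∨ cd t y = cd t x + (2*ℓ+2))) := by omega
    rcases hcases with hA | ⟨hox, hoy, hB⟩
    · rcases Nat.mod_two_eq_zero_or_one (cd t x) with hpar | hpar
      · -- x is a gap point, y = t(...) is its partner
        refine ⟨x, hEofPair x y (by omega) ?_⟩
        rw [hPtval]
        obtain ⟨h1, h2⟩ := hM ((cd t x + 1)/2 + ℓ) (by omega)
        omega
      · -- y is the gap point, x the odd point
        refine ⟨y, ?_⟩
        rw [Finset.pair_comm]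
        refine hEofPair y x (by omega) ?_
        rw [hPtval]
        obtain ⟨h1, h2⟩ := hM ((cd t y + 1)/2 + ℓ) (by omega)
        omega
    · rcases hB with hB | hB
      · refine ⟨y, ?_⟩
        rw [Finset.pair_comm]
        refine hEofPair y x hox ?_
        rw [hPtval]
        obtain ⟨h1, h2⟩ := hM ((cd t y + 1)/2 + ℓ) (by omega)
        omega
      · refine ⟨x, hEofPair x y hoy ?_⟩
        rw [hPtval]
        obtain ⟨h1, h2⟩ := hM ((cd t x + 1)/2 + ℓ) (by omega)
        omega
  -- the main characterization of HnC
  have hHnC_iff : ∀ e : Finset (Fin n), e ∈ HnC 2 ℓ w ↔ ∃ x, e = E x := by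
    intro e
    constructor
    · intro he
      have hcard : e.card = 2 := by
        have := (Finset.mem_filter.mp (by simpa only [HnC] using he)).1
        exact (Finset.mem_powersetCard.mp this).2
      obtain ⟨x, y, hxy, rfl⟩ := Finset.card_eq_two.mp hcard
      have hall := (hmemHnC x y hxy).mp he
      rcases le_total (cd t x) (cd t y) with hle | hle
      · exact hbuild x y hxy hle (claimB_fwd hℓ hle (by have := hcdle y; omega) hall)
      · obtain ⟨z, hz⟩ := hbuild y x (Ne.symm hxy) hle
          (claimB_fwd hℓ hle (by have := hcdle x; omega)
            (fun q hq => (hall q hq).symm))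
        exact ⟨z, by rw [Finset.pair_comm]; exact hz⟩
    · rintro ⟨x, rfl⟩
      exact hEmem x
  -- injectivity of E
  have hEinj : Function.Injective E := by
    intro x y hxy
    have hx : x ∈ E y := by rw [← hxy]; simp [hE]
    have hy : y ∈ E x := by rw [hxy]; simp [hE]
    simp only [hE, Finset.mem_insert, Finset.mem_singleton] at hx hy
    rcases hx with rfl | hx
    · rfl
    rcases hy with h | hy
    · exact h.symm
    · exfalso
      have hcx : cd t x = 2 * (Pt y).val + 1 := by rw [hx, cd_of_t ht]
      have hcy : cd t y = 2 * (Pt x).val + 1 := by rw [hy, cd_of_t ht]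
      have hvx := hPtval x
      have hvy := hPtval y
      rw [hcx] at hvx
      rw [hcy] at hvy
      obtain ⟨h1, h2⟩ := hM ((2 * (Pt y).val + 1 + 1)/2 + ℓ) (by have := (Pt y).isLt; omega)
      obtain ⟨h3, h4⟩ := hM ((2 * (Pt x).val + 1 + 1)/2 + ℓ) (by have := (Pt x).isLt; omega)
      have := (Pt x).isLt
      have := (Pt y).isLt
      omega
  -- type-1 edges
  have hR1 : ∀ e : Finset (Fin n),
      (∃ i, e = {w i, w (i + 1)}) ↔ (∃ x, cd t x % 2 = 1 ∧ e = E x) := by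
    intro e
    have hPtsucc : ∀ i : Fin (2*ℓ+1), t (Pt (t (π i))) = w (i+1) := by
      intro i
      rw [hwt (i+1)]
      congr 1
      ext
      rw [hPtval, cd_of_t ht, hπsucc]
      obtain ⟨h1, h2⟩ := hM ((2 * (π i).val + 1 + 1)/2 + ℓ) (by have := (π i).isLt; omega)
      obtain ⟨h3, h4⟩ := hM ((π i).val + (ℓ+1)) (by have := (π i).isLt; omega)
      omega
    constructor
    · rintro ⟨i, rfl⟩
      refine ⟨t (π i), by rw [cd_of_t ht]; omega, ?_⟩
      simp only [hE]
      rw [hPtsucc i, hwt i]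
    · rintro ⟨x, hodd, rfl⟩
      have hd : cd t x / 2 < 2*ℓ+1 := by have := hcdle x; omega
      obtain ⟨i, hi⟩ := hπsurj ⟨cd t x / 2, hd⟩
      have hx : x = t (π i) := by rw [hi]; exact cd_odd_eq ht x hodd hd
      refine ⟨i, ?_⟩
      simp only [hE]
      rw [hx, hPtsucc i, ← hwt i]
  -- type-2 edges
  have harcO : ∀ (i : Fin (2*ℓ+1)) (v : Fin n),
      v ∈ arcOO (w (i-1)) (w (i+1)) ↔
        ((π (i-1)).val < 2*ℓ ∧ cd t v = 2*(π (i-1)).val + 2) ∨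
        ((π (i-1)).val = 2*ℓ ∧ (cd t v = 0 ∨ cd t v = 2*(2*ℓ+1))) := by
    intro i v
    rw [hwt (i-1), hwt (i+1), mem_arcOO_cd ht]
    have h1 := hπpred i
    have h2 := hπsucc i
    obtain ⟨h3, h4⟩ := hM ((π i).val + ℓ) (by have := (π i).isLt; omega)
    obtain ⟨h5, h6⟩ := hM ((π i).val + (ℓ+1)) (by have := (π i).isLt; omega)
    have hcv := hcdle v
    rw [h1, h2]
    omega
  have hR2 : ∀ e : Finset (Fin n),
      (∃ i, ∃ v ∈ arcOO (w (i-1)) (w (i+1)), e = {v, w i}) ↔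
        (∃ x, cd t x % 2 = 0 ∧ e = E x) := by
    intro e
    constructor
    · rintro ⟨i, v, hv, rfl⟩
      rw [harcO i v] at hv
      refine ⟨v, by omega, ?_⟩
      simp only [hE]
      have hPtv : t (Pt v) = w i := by
        rw [hwt i]
        congr 1
        ext
        rw [hPtval]
        have hp1 := hπpred i
        obtain ⟨h3, h4⟩ := hM ((π i).val + ℓ) (by have := (π i).isLt; omega)
        obtain ⟨h5, h6⟩ := hM ((cd t v + 1)/2 + ℓ) (by have := hcdle v; omega)
        have := (π i).isLt
        omega
      rw [hPtv]
    · rintro ⟨x, heven, rfl⟩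
      have hbx := hcdle x
      -- the gap position of x
      by_cases hwrap : cd t x = 0 ∨ cd t x = 2*(2*ℓ+1)
      · obtain ⟨i, hi⟩ := hπsurj ⟨(2*ℓ + (ℓ+1)) % (2*ℓ+1), Nat.mod_lt _ (by omega)⟩
        have hiv : (π i).val = (2*ℓ + (ℓ+1)) % (2*ℓ+1) := by rw [hi]
        obtain ⟨h3, h4⟩ := hM (2*ℓ + (ℓ+1)) (by omega)
        have hp1 := hπpred i
        obtain ⟨h5, h6⟩ := hM ((π i).val + ℓ) (by have := (π i).isLt; omega)
        refine ⟨i, x, ?_, ?_⟩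
        · rw [harcO i x]
          right
          constructor
          · omega
          · omega
        · simp only [hE]
          have hPtv : t (Pt x) = w i := by
            rw [hwt i]
            congr 1
            ext
            rw [hPtval]
            obtain ⟨h7, h8⟩ := hM ((cd t x + 1)/2 + ℓ) (by omega)
            omega
          rw [hPtv]
      · obtain ⟨i, hi⟩ := hπsurj ⟨(cd t x/2 - 1 + (ℓ+1)) % (2*ℓ+1), Nat.mod_lt _ (by omega)⟩
        have hiv : (π i).val = (cd t x/2 - 1 + (ℓ+1)) % (2*ℓ+1) := by rw [hi]
        obtain ⟨h3, h4⟩ := hM (cd t x/2 - 1 + (ℓ+1)) (by omega)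
        have hp1 := hπpred i
        obtain ⟨h5, h6⟩ := hM ((π i).val + ℓ) (by have := (π i).isLt; omega)
        refine ⟨i, x, ?_, ?_⟩
        · rw [harcO i x]
          left
          omega
        · simp only [hE]
          have hPtv : t (Pt x) = w i := by
            rw [hwt i]
            congr 1
            ext
            rw [hPtval]
            obtain ⟨h7, h8⟩ := hM ((cd t x + 1)/2 + ℓ) (by omega)
            omega
          rw [hPtv]
  -- conclusion
  constructor
  · intro e
    rw [hHnC_iff e, hR1 e, hR2 e]
    constructor
    · rintro ⟨x, rfl⟩
      rcases Nat.mod_two_eq_zero_or_one (cd t x) with hpar | hpar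
      · exact Or.inr ⟨x, hpar, rfl⟩
      · exact Or.inl ⟨x, hpar, rfl⟩
    · rintro (⟨x, -, rfl⟩ | ⟨x, -, rfl⟩) <;> exact ⟨x, rfl⟩
  · have himg : HnC 2 ℓ w = Finset.image E Finset.univ := by
      ext e
      rw [hHnC_iff e, Finset.mem_image]
      constructor
      · rintro ⟨x, rfl⟩; exact ⟨x, Finset.mem_univ x, rfl⟩
      · rintro ⟨x, -, rfl⟩; exact ⟨x, rfl⟩
    rw [himg, Finset.card_image_of_injective _ hEinj, Finset.card_univ, Fintype.card_fin]

-- STATEMENT 11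
theorem HnC_two_structure (n ℓ : ℕ) (hℓ : 1 ≤ ℓ) (w : Fin (2 * ℓ + 1) → Fin n)
    (hw : SemiValid ℓ w) :
    (∀ e : Finset (Fin n), e ∈ HnC 2 ℓ w ↔
      ((∃ i : Fin (2 * ℓ + 1), e = {w i, w (i + 1)}) ∨
        (∃ i : Fin (2 * ℓ + 1), ∃ v ∈ arcOO (w (i - 1)) (w (i + 1)), e = {v, w i}))) ∧
    (HnC 2 ℓ w).card = n :=
  HnC_two_structure' n ℓ hℓ w hw
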